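/- Define on D = ⌊X⁺⌋₁ ∪ ⌊X⁺⌋_{2-2}, where ⌊X⁺⌋₁ = {(⌊u⌋,1)} and ⌊X⁺⌋_{2-2} = {(⌊u⌋,2) : |u| = 2}, the operations: for letters x, x', x ⊣ x' = x' ⊣ x = (⌊xx'⌋,1) and x ⊢ x' = x' ⊢ x = (⌊xx'⌋,2); and whenever |u||v| > 1, all four products (⌊u⌋,p) ⊢ (⌊v⌋,q), (⌊v⌋,q) ⊢ (⌊u⌋,p), (⌊u⌋,p) ⊣ (⌊v⌋,q), (⌊v⌋,q) ⊣ (⌊u⌋,p) equal (⌊uv⌋,1). Then (D, ⊢, ⊣) is a commutative disemigroup (both operations commutative, both associative, satisfying the three dialgebra identities). -/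

import Mathlib

variable {X : Type*} [LinearOrder X]

/-- ⌊u⌋: the nondecreasing rearrangement of the word u. -/
def sortW (u : List X) : List X := u.insertionSort (· ≤ ·)

/-- D = ⌊X⁺⌋₁ ∪ ⌊X⁺⌋_{2-2}: sorted nonempty words with center 1, together with
sorted words of length 2 with center 2. -/
def CDSet : Set (List X × ℕ) :=
  {p | p.1 ≠ [] ∧ List.Pairwise (· ≤ ·) p.1 ∧
    (p.2 = 1 ∨ (p.2 = 2 ∧ p.1.length = 2))}

/-- ⊢ on D: for two letters x ⊢ x' = (⌊xx'⌋, 2); otherwise (⌊uv⌋, 1). -/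
def copL (a b : List X × ℕ) : List X × ℕ :=
  if a.1.length = 1 ∧ b.1.length = 1 then (sortW (a.1 ++ b.1), 2)
  else (sortW (a.1 ++ b.1), 1)

/-- ⊣ on D: always (⌊uv⌋, 1). -/
def copR (a b : List X × ℕ) : List X × ℕ := (sortW (a.1 ++ b.1), 1)

lemma sortW_perm (u : List X) : (sortW u).Perm u := List.perm_insertionSort _ _

lemma sortW_sorted (u : List X) : List.Pairwise (· ≤ ·) (sortW u) :=
  List.pairwise_insertionSort _ _

lemma sortW_length (u : List X) : (sortW u).length = u.length :=
  (sortW_perm u).length_eq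

lemma sortW_congr {u v : List X} (h : u.Perm v) : sortW u = sortW v :=
  List.Perm.eq_of_pairwise' (sortW_sorted u) (sortW_sorted v)
    (((sortW_perm u).trans h).trans (sortW_perm v).symm)

lemma sortW_comm (u v : List X) : sortW (u ++ v) = sortW (v ++ u) :=
  sortW_congr (List.perm_append_comm)

lemma sortW_left (u v : List X) : sortW (sortW u ++ v) = sortW (u ++ v) :=
  sortW_congr ((sortW_perm u).append_right v)

lemma sortW_right (u v : List X) : sortW (u ++ sortW v) = sortW (u ++ v) :=
  sortW_congr ((sortW_perm v).append_left u)

lemma copL_fst (a b : List X × ℕ) : (copL a b).1 = sortW (a.1 ++ b.1) := by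
  unfold copL; split_ifs <;> rfl

lemma copL_eq {a b : List X × ℕ} (h : ¬(a.1.length = 1 ∧ b.1.length = 1)) :
    copL a b = (sortW (a.1 ++ b.1), 1) := by
  unfold copL; rw [if_neg h]

lemma len_pos {a : List X × ℕ} (ha : a ∈ CDSet) : 1 ≤ a.1.length :=
  List.length_pos_iff.mpr ha.1

/-- (D, ⊢, ⊣) is a commutative disemigroup: closed under both
operations, both operations commutative and associative, and the three dialgebra
identities hold. -/
theorem stmt13 :
    (∀ a ∈ CDSet (X := X), ∀ b ∈ CDSet, copL a b ∈ CDSet ∧ copR a b ∈ CDSet) ∧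
    (∀ a ∈ CDSet (X := X), ∀ b ∈ CDSet,
      copL a b = copL b a ∧ copR a b = copR b a) ∧
    (∀ a ∈ CDSet (X := X), ∀ b ∈ CDSet, ∀ c ∈ CDSet,
      copL (copL a b) c = copL a (copL b c) ∧
      copR (copR a b) c = copR a (copR b c) ∧
      copR a (copL b c) = copR a (copR b c) ∧
      copL (copR a b) c = copL (copL a b) c ∧
      copL a (copR b c) = copR (copL a b) c) := by
  have hne : ∀ {a b : List X × ℕ}, a ∈ CDSet → b ∈ CDSet →
      sortW (a.1 ++ b.1) ≠ [] := by
    intro a b ha hb h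
    have h1 := len_pos ha
    have h2 := sortW_length (a.1 ++ b.1)
    rw [h, List.length_append] at h2
    simp at h2
    omega
  have hlen2 : ∀ {a b : List X × ℕ}, a ∈ CDSet → b ∈ CDSet →
      2 ≤ (sortW (a.1 ++ b.1)).length := by
    intro a b ha hb
    have h1 := len_pos ha
    have h2 := len_pos hb
    rw [sortW_length, List.length_append]
    omega
  refine ⟨?_, ?_, ?_⟩
  · intro a ha b hb
    constructor
    · unfold copL
      split_ifs with h
      · exact ⟨hne ha hb, sortW_sorted _, Or.inr ⟨rfl, by
          rw [sortW_length, List.length_append, h.1, h.2]⟩⟩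
      · exact ⟨hne ha hb, sortW_sorted _, Or.inl rfl⟩
    · exact ⟨hne ha hb, sortW_sorted _, Or.inl rfl⟩
  · intro a ha b hb
    constructor
    · unfold copL
      rw [sortW_comm]
      split_ifs with h h' h' <;> simp_all
    · unfold copR; rw [sortW_comm]
  · intro a ha b hb c hc
    have hab := hlen2 ha hb
    have hbc := hlen2 hb hc
    have h1 : ¬((copL a b).1.length = 1 ∧ c.1.length = 1) := by
      rw [copL_fst]; omega
    have h1' : ¬((copR a b).1.length = 1 ∧ c.1.length = 1) := by
      unfold copR; simp only; omega
    have h2 : ¬(a.1.length = 1 ∧ (copL b c).1.length = 1) := by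
      rw [copL_fst]; omega
    have h2' : ¬(a.1.length = 1 ∧ (copR b c).1.length = 1) := by
      unfold copR; simp only; omega
    refine ⟨?_, ?_, ?_, ?_, ?_⟩
    · rw [copL_eq h1, copL_eq h2]
      simp only [copL_fst, copR, sortW_left, sortW_right, List.append_assoc]
    · unfold copR
      simp only [sortW_left, sortW_right, List.append_assoc]
    · unfold copR
      rw [copL_fst]
    · rw [copL_eq h1, copL_eq h1']
      simp only [copL_fst, copR, sortW_left]
    · rw [copL_eq h2']
      unfold copR
      simp only [copL_fst, copR, sortW_left, sortW_right, List.append_assoc]
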